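/- Let (X,d) be a forward complete forward metric space and φ : X → (−∞,∞] a proper, lower semicontinuous function (w.r.t. the forward topology). Then the global slope 𝔩_φ(x) := sup_{y≠x} [φ(x)−φ(y)]₊ / d(x,y) is lower semicontinuous. -/

import Mathlib

open Filter Topology MeasureTheory
open scoped ENNReal

/-- The nonnegative part of an extended real, as an extended nonnegative real. -/
noncomputable def erealPosPart (x : EReal) : ℝ≥0∞ :=
  if x = ⊤ then ⊤ else ENNReal.ofReal x.toReal

/-- The forward topology generated by forward balls of an asymmetric metric. -/
def fwdTop {X : Type*} (d : X → X → ℝ) : TopologicalSpace X :=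
  TopologicalSpace.generateFrom
    {s : Set X | ∃ x : X, ∃ r : ℝ, 0 < r ∧ s = {y | d x y < r}}

/-- The global slope `𝔩_φ(x) = sup_{y≠x} [φ(x)−φ(y)]₊/d(x,y)`, with the
convention `𝔩_φ(x) = ∞` outside the proper domain of `φ`. -/
noncomputable def globalSlope {X : Type*} (d : X → X → ℝ) (φ : X → EReal) (x : X) : ℝ≥0∞ :=
  if φ x = ⊤ then ⊤ else
    ⨆ y : X, ⨆ _ : y ≠ x, erealPosPart (φ x - φ y) / ENNReal.ofReal (d x y)

lemma erealPosPart_coe (a : ℝ) : erealPosPart (a : EReal) = ENNReal.ofReal a := by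
  simp [erealPosPart]

lemma fwd_mem_nhds_iff {X : Type*} (d : X → X → ℝ)
    (hd_self : ∀ x, d x x = 0)
    (hd_tri : ∀ x y z, d x z ≤ d x y + d y z) (x : X) (s : Set X) :
    s ∈ @nhds X (fwdTop d) x ↔ ∃ ε > 0, {y | d x y < ε} ⊆ s := by
  letI := fwdTop d
  constructor
  · intro hs
    rcases mem_nhds_iff.1 hs with ⟨U, hUs, hU, hxU⟩
    suffices h : ∀ V : Set X,
        TopologicalSpace.GenerateOpen
          {s : Set X | ∃ x : X, ∃ r : ℝ, 0 < r ∧ s = {y | d x y < r}} V →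
        ∀ z ∈ V, ∃ ε > 0, {y | d z y < ε} ⊆ V by
      obtain ⟨ε, hε, hb⟩ := h U hU x hxU
      exact ⟨ε, hε, hb.trans hUs⟩
    intro V hV
    induction hV with
    | basic t ht =>
        rcases ht with ⟨w, r, hr, rfl⟩
        intro z hz
        simp only [Set.mem_setOf_eq] at hz
        refine ⟨r - d w z, by linarith, fun y hy => ?_⟩
        simp only [Set.mem_setOf_eq] at *
        have := hd_tri w z y
        linarith
    | univ => exact fun z _ => ⟨1, one_pos, fun _ _ => trivial⟩
    | inter t₁ t₂ h₁ h₂ ih₁ ih₂ =>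
        intro z hz
        obtain ⟨ε₁, hε₁, hb₁⟩ := ih₁ z hz.1
        obtain ⟨ε₂, hε₂, hb₂⟩ := ih₂ z hz.2
        refine ⟨min ε₁ ε₂, lt_min hε₁ hε₂, fun y hy => ?_⟩
        simp only [Set.mem_setOf_eq] at hy
        exact ⟨hb₁ (lt_of_lt_of_le hy (min_le_left _ _)),
           hb₂ (lt_of_lt_of_le hy (min_le_right _ _))⟩
    | sUnion S hS ih =>
        intro z hz
        rcases hz with ⟨t, ht, hzt⟩
        obtain ⟨ε, hε, hb⟩ := ih t ht z hzt
        exact ⟨ε, hε, fun y hy => ⟨t, ht, hb hy⟩⟩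
  · rintro ⟨ε, hε, hsub⟩
    refine mem_nhds_iff.2 ⟨{y | d x y < ε}, hsub, ?_, by simp [hd_self x, hε]⟩
    exact TopologicalSpace.GenerateOpen.basic _ ⟨x, ε, hε, rfl⟩

theorem stmt_10 {X : Type*} (d : X → X → ℝ) (star : X) (Θ : ℝ → ℝ)
    -- asymmetric metric space axioms
    (hd_nonneg : ∀ x y, 0 ≤ d x y)
    (hd_eq : ∀ x y, d x y = 0 ↔ x = y)
    (hd_tri : ∀ x y z, d x z ≤ d x y + d y z)
    -- pointed forward Θ-metric space structure
    (hΘ_one : ∀ r > (0:ℝ), 1 ≤ Θ r)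
    (hΘ_mono : ∀ r s : ℝ, 0 < r → r ≤ s → Θ r ≤ Θ s)
    (hΘ : ∀ r > (0:ℝ), ∀ x y, d star x < r → d star y < r → d x y ≤ Θ r * d y x)
    -- forward completeness
    (hcomplete : ∀ u : ℕ → X,
      (∀ ε > (0:ℝ), ∃ N : ℕ, ∀ i j : ℕ, N < i → i ≤ j → d (u i) (u j) < ε) →
      ∃ x : X, Tendsto (fun i => d x (u i)) atTop (nhds 0))
    -- φ proper, never −∞, lower semicontinuous w.r.t. the forward topology
    (φ : X → EReal) (hproper : ∃ x, φ x ≠ ⊤) (hbot : ∀ x, φ x ≠ ⊥)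
    (hlsc : @LowerSemicontinuous X EReal (fwdTop d) _ φ) :
    @LowerSemicontinuous X ℝ≥0∞ (fwdTop d) _ (globalSlope d φ) := by
  letI := fwdTop d
  have hd_self : ∀ x, d x x = 0 := fun x => (hd_eq x x).2 rfl
  intro x c hc
  have hcT : c ≠ ⊤ := (hc.trans_le le_top).ne
  set C := c.toReal with hC
  have hcC : c = ENNReal.ofReal C := (ENNReal.ofReal_toReal hcT).symm
  have hC0 : 0 ≤ C := ENNReal.toReal_nonneg
  -- reduce to a single quantitative situation
  obtain ⟨y₀, hy₀x, b, hb, m, η, hη, hmφ, hkey⟩ :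
      ∃ y₀, y₀ ≠ x ∧ ∃ b : ℝ, φ y₀ = (b : EReal) ∧ ∃ m η : ℝ, 0 < η ∧
        (m : EReal) < φ x ∧ C * (d x y₀ + η) < m - b := by
    by_cases hxT : φ x = ⊤
    · obtain ⟨w, hw⟩ := hproper
      have hwx : w ≠ x := fun h => hw (h ▸ hxT)
      have hbw : φ w = ((φ w).toReal : EReal) := (EReal.coe_toReal hw (hbot w)).symm
      have hDw : 0 ≤ d x w := hd_nonneg x w
      refine ⟨w, hwx, (φ w).toReal, hbw, (φ w).toReal + (C + 1) * (d x w + 1), 1,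
        one_pos, ?_, by nlinarith⟩
      rw [hxT]; exact EReal.coe_lt_top _
    · have hxB := hbot x
      set a := (φ x).toReal with ha
      have hax : φ x = (a : EReal) := (EReal.coe_toReal hxT hxB).symm
      rw [globalSlope, if_neg hxT] at hc
      rw [gt_iff_lt, lt_iSup_iff] at hc
      obtain ⟨y, hcy⟩ := hc
      rw [lt_iSup_iff] at hcy
      obtain ⟨hyx, hcy⟩ := hcy
      -- φ y ≠ ⊤
      have hyT : φ y ≠ ⊤ := by
        intro hT
        rw [hax, hT] at hcy
        have : (a : EReal) - ⊤ = ⊥ := by simp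
        rw [this] at hcy
        simp [erealPosPart] at hcy
      set b := (φ y).toReal with hbdef
      have hby : φ y = (b : EReal) := (EReal.coe_toReal hyT (hbot y)).symm
      have hsub : φ x - φ y = ((a - b : ℝ) : EReal) := by
        rw [hax, hby, EReal.coe_sub]
      rw [hsub, erealPosPart_coe] at hcy
      set D := d x y with hD
      have hD0 : 0 < D :=
        (hd_nonneg x y).lt_of_ne (fun h => hyx ((hd_eq x y).1 h.symm).symm)
      have hab : 0 < a - b := by
        by_contra h
        push_neg at h
        rw [ENNReal.ofReal_eq_zero.2 h] at hcy
        simp at hcy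
      have hCD : C * D < a - b := by
        rw [hcC, ENNReal.lt_div_iff_mul_lt (Or.inl (by positivity)) (Or.inl ENNReal.ofReal_ne_top),
          ← ENNReal.ofReal_mul hC0] at hcy
        exact (ENNReal.ofReal_lt_ofReal_iff hab).1 hcy
      set η := (a - b - C * D) / (2 * (C + 1)) with hηdef
      have hη : 0 < η := div_pos (by linarith) (by positivity)
      refine ⟨y, hyx, b, hby, a - η, η, hη, ?_, ?_⟩
      · rw [hax]
        exact_mod_cast sub_lt_self a hη
      · have : η * (C + 1) = (a - b - C * D) / 2 := by
          rw [hηdef, div_mul_eq_mul_div, mul_div_mul_right _ _ (by positivity : (C + 1) ≠ 0)]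
        nlinarith
  -- common quantitative argument
  set D := d x y₀ with hD
  have hD0 : 0 < D :=
    (hd_nonneg x y₀).lt_of_ne (fun h => hy₀x ((hd_eq x y₀).1 h.symm).symm)
  set r := d star x + 1 with hr
  have hr0 : 0 < r := by have := hd_nonneg star x; linarith
  set T := Θ r with hT
  have hT1 : 1 ≤ T := hΘ_one r hr0
  have hT0 : 0 < T := lt_of_lt_of_le one_pos hT1
  obtain ⟨ε₂, hε₂, hsubm⟩ :=
    (fwd_mem_nhds_iff d hd_self hd_tri x _).1 (hlsc x (m : EReal) hmφ)
  set ε := min (min 1 ε₂) (min D (η / T)) with hε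
  have hε0 : 0 < ε := by
    apply lt_min (lt_min one_pos hε₂) (lt_min hD0 (by positivity))
  have hball : {z | d x z < ε} ∈ @nhds X (fwdTop d) x :=
    (fwd_mem_nhds_iff d hd_self hd_tri x _).2 ⟨ε, hε0, subset_rfl⟩
  refine Filter.mem_of_superset hball fun z hz => ?_
  simp only [Set.mem_setOf_eq] at hz
  have hz1 : d x z < 1 := hz.trans_le ((min_le_left _ _).trans (min_le_left _ _))
  have hzε₂ : d x z < ε₂ := hz.trans_le ((min_le_left _ _).trans (min_le_right _ _))
  have hzD : d x z < D := hz.trans_le ((min_le_right _ _).trans (min_le_left _ _))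
  have hzη : d x z < η / T := hz.trans_le ((min_le_right _ _).trans (min_le_right _ _))
  have hmz : (m : EReal) < φ z := hsubm hzε₂
  show c < globalSlope d φ z
  by_cases hzT : φ z = ⊤
  · rw [globalSlope, if_pos hzT]
    exact lt_top_iff_ne_top.2 hcT
  · set t := (φ z).toReal with htdef
    have htz : φ z = (t : EReal) := (EReal.coe_toReal hzT (hbot z)).symm
    have hmt : m < t := by rwa [htz, EReal.coe_lt_coe_iff] at hmz
    have hne : y₀ ≠ z := by
      rintro rfl
      rw [hD] at hzD
      exact lt_irrefl _ hzD
    have hstarz : d star z < r := by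
      have := hd_tri star x z
      rw [hr]; linarith
    have hbwd : d z x ≤ T * d x z :=
      hΘ r hr0 z x hstarz (by rw [hr]; linarith)
    have hdzy : d z y₀ < D + η := by
      have h1 := hd_tri z x y₀
      have h2 : T * d x z < T * (η / T) := mul_lt_mul_of_pos_left hzη hT0
      have h3 : T * (η / T) = η := mul_div_cancel₀ η hT0.ne'
      rw [← hD] at h1
      linarith
    have hdzy0 : 0 < d z y₀ :=
      (hd_nonneg z y₀).lt_of_ne (fun h => hne ((hd_eq z y₀).1 h.symm).symm)
    rw [globalSlope, if_neg hzT]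
    have hterm : erealPosPart (φ z - φ y₀) / ENNReal.ofReal (d z y₀) ≤
        ⨆ y, ⨆ _ : y ≠ z, erealPosPart (φ z - φ y) / ENNReal.ofReal (d z y) :=
      le_iSup₂ (f := fun y (_ : y ≠ z) =>
        erealPosPart (φ z - φ y) / ENNReal.ofReal (d z y)) y₀ hne
    refine lt_of_lt_of_le ?_ hterm
    have hsub2 : φ z - φ y₀ = ((t - b : ℝ) : EReal) := by
      rw [htz, hb, EReal.coe_sub]
    rw [hsub2, erealPosPart_coe]
    rw [hcC, ENNReal.lt_div_iff_mul_lt (Or.inl (by positivity)) (Or.inl ENNReal.ofReal_ne_top),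
      ← ENNReal.ofReal_mul hC0]
    have h1 : C * d z y₀ ≤ C * (D + η) := mul_le_mul_of_nonneg_left hdzy.le hC0
    have h2 : 0 ≤ C * (D + η) := mul_nonneg hC0 (by linarith)
    apply ENNReal.ofReal_lt_ofReal_iff (by linarith) |>.2
    linarith
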